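/- (Type C_n, part (i) of the proposition on fundamental weights.) Let n ≥ 2. For every j ∈ {1, …, n}, ℓ_{ϖ₁}⁻(ϖ_j) = 2n − j. In particular, the minimum over j ∈ {1, …, n} of ℓ_{ϖ₁}⁻(ϖ_j) equals n and is attained only at j = n, by the composition w = s₁ ∘ s₂ ∘ ⋯ ∘ s_n (with s_n applied first), which satisfies ⟨w ϖ_n, ϖ₁⟩ < 0. -/

import Mathlib

open scoped RealInnerProductSpace

/-- The `j`-th simple reflection of type `Cₙ` (`1 ≤ j ≤ n`), acting on `ℝⁿ`:
for `j < n` it transposes the coordinates numbered `j` and `j+1` (in `1`-based numbering),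
and for `j = n` it negates the last coordinate. -/
noncomputable def sC (n j : ℕ) : EuclideanSpace ℝ (Fin n) → EuclideanSpace ℝ (Fin n) :=
  fun v => WithLp.toLp 2 fun i =>
    if j = n then (if (i : ℕ) + 1 = n then -(v i) else v i)
    else if (i : ℕ) + 1 = j then v ⟨j % n, Nat.mod_lt _ i.pos⟩
    else if (i : ℕ) = j then v ⟨(j - 1) % n, Nat.mod_lt _ i.pos⟩
    else v i

/-- The composition of the simple reflections indexed by the entries of `l`
(the last entry of the list is applied first). -/
noncomputable def compC (n : ℕ) (l : List ℕ) :
    EuclideanSpace ℝ (Fin n) → EuclideanSpace ℝ (Fin n) :=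
  l.foldr (fun j g => sC n j ∘ g) id

/-- The fundamental weight `ϖⱼ = e₁ + ⋯ + eⱼ` of type `Cₙ` (`1 ≤ j ≤ n`). -/
noncomputable def wtC (n j : ℕ) : EuclideanSpace ℝ (Fin n) :=
  WithLp.toLp 2 fun i => if (i : ℕ) < j then 1 else 0

lemma sC_apply_lt (n j : ℕ) (hj1 : 1 ≤ j) (hjn : j < n) (v : EuclideanSpace ℝ (Fin n)) (i : Fin n) :
    sC n j v i = if (i:ℕ) + 1 = j then v ⟨j, hjn⟩ else if (i:ℕ) = j then v ⟨j-1, by omega⟩ else v i := by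
  have h1 : (⟨j % n, Nat.mod_lt _ i.pos⟩ : Fin n) = ⟨j, hjn⟩ := by
    simp [Fin.mk.injEq, Nat.mod_eq_of_lt hjn]
  have h2 : (⟨(j-1) % n, Nat.mod_lt _ i.pos⟩ : Fin n) = ⟨j-1, by omega⟩ := by
    simp [Fin.mk.injEq, Nat.mod_eq_of_lt (by omega : j - 1 < n)]
  simp only [sC, PiLp.toLp_apply, if_neg (Nat.ne_of_lt hjn)]
  rw [h1, h2]

lemma sC_apply_n (n : ℕ) (v : EuclideanSpace ℝ (Fin n)) (i : Fin n) :
    sC n n v i = if (i:ℕ) + 1 = n then -(v i) else v i := by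
  simp [sC]

lemma compC_cons (n : ℕ) (m : ℕ) (l : List ℕ) (v : EuclideanSpace ℝ (Fin n)) :
    compC n (m :: l) v = sC n m (compC n l v) := rfl

lemma compC_append (n : ℕ) (l₁ l₂ : List ℕ) (v : EuclideanSpace ℝ (Fin n)) :
    compC n (l₁ ++ l₂) v = compC n l₁ (compC n l₂ v) := by
  induction l₁ with
  | nil => rfl
  | cons a t ih => simp only [List.cons_append, compC_cons, ih]

noncomputable def avec (n j m : ℕ) : EuclideanSpace ℝ (Fin n) :=
  WithLp.toLp 2 fun i => if (i : ℕ) < j - 1 then 1 else if (i : ℕ) = m then 1 else 0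

noncomputable def cvec (n j m : ℕ) : EuclideanSpace ℝ (Fin n) :=
  WithLp.toLp 2 fun i => if (i : ℕ) = m then -1 else if (i : ℕ) < (if m + 1 < j then j else j - 1) then 1 else 0

lemma sC_avec (n j m : ℕ) (hj : 1 ≤ j) (hm1 : j - 1 ≤ m) (hm2 : m + 1 ≤ n - 1) :
    sC n (m+1) (avec n j m) = avec n j (m+1) := by
  have hn : 2 ≤ n := by omega
  ext i
  rw [sC_apply_lt n (m+1) (by omega) (by omega)]
  simp only [avec, PiLp.toLp_apply]
  split_ifs <;> first | rfl | omega

lemma sC_n_avec (n j : ℕ) (hj : 1 ≤ j) (hjn : j ≤ n) (hn : 1 ≤ n) :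
    sC n n (avec n j (n-1)) = cvec n j (n-1) := by
  ext i
  rw [sC_apply_n]
  simp only [avec, cvec, PiLp.toLp_apply]
  have : ¬ (n - 1 + 1 < j) := by omega
  rw [if_neg this]
  split_ifs <;> first | rfl | omega | norm_num | (exfalso; omega)

lemma sC_cvec (n j m : ℕ) (hj : 1 ≤ j) (hjn : j ≤ n) (hm1 : 1 ≤ m) (hm2 : m ≤ n - 1) :
    sC n m (cvec n j m) = cvec n j (m-1) := by
  have hn : 2 ≤ n := by omega
  ext i
  rw [sC_apply_lt n m (by omega) (by omega)]
  simp only [cvec, PiLp.toLp_apply]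
  split_ifs <;> first | rfl | omega | norm_num | (exfalso; omega)

lemma wtC_eq_avec (n j : ℕ) (hj : 1 ≤ j) : wtC n j = avec n j (j-1) := by
  ext i
  simp only [wtC, avec, PiLp.toLp_apply]
  split_ifs <;> first | rfl | omega

lemma phaseA (n j : ℕ) (hj : 1 ≤ j) (hjn : j ≤ n) :
    ∀ k a, j - 1 + k ≤ a → a ≤ n - 1 →
    compC n ((List.range k).map (fun t => a - t)) (avec n j (a - k)) = avec n j a := by
  intro k
  induction k with
  | zero => intro a _ _; simp [compC]
  | succ k ih =>
    intro a h1 h2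
    have hrange : (List.range (k+1)).map (fun t => a - t)
        = a :: (List.range k).map (fun t => (a-1) - t) := by
      simp only [List.range_succ_eq_map, List.map_cons, List.map_map, Nat.sub_zero]
      refine congrArg _ (congrArg (fun f => List.map f _) (funext fun t => ?_))
      simp only [Function.comp_apply]; omega
    rw [hrange, compC_cons]
    have ha : a - (k+1) = (a-1) - k := by omega
    rw [ha, ih (a-1) (by omega) (by omega)]
    have : a = (a-1) + 1 := by omega
    rw [this]
    exact sC_avec n j (a-1) hj (by omega) (by omega)

lemma phaseC (n j : ℕ) (hj : 1 ≤ j) (hjn : j ≤ n) :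
    ∀ k a, 1 ≤ a → a + k ≤ n → 1 ≤ k →
    compC n ((List.range k).map (fun t => t + a)) (cvec n j (a + k - 1)) = cvec n j (a - 1) := by
  intro k
  induction k with
  | zero => intro a _ _ h; omega
  | succ k ih =>
    intro a ha h1 _
    have hrange : (List.range (k+1)).map (fun t => t + a)
        = a :: (List.range k).map (fun t => t + (a+1)) := by
      simp only [List.range_succ_eq_map, List.map_cons, List.map_map, Nat.zero_add]
      refine congrArg _ (congrArg (fun f => List.map f _) (funext fun t => ?_))
      simp only [Function.comp_apply]; omega
    rw [hrange, compC_cons]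
    rcases Nat.eq_zero_or_pos k with hk | hk
    · subst hk
      simp only [List.range_zero, List.map_nil]
      show sC n a (compC n [] (cvec n j (a + 1 - 1))) = cvec n j (a-1)
      simp only [compC, List.foldr_nil]
      show sC n a (cvec n j a) = cvec n j (a-1)
      have : a + 1 - 1 = a := by omega
      exact sC_cvec n j a hj hjn ha (by omega)
    · have h2 : (a+1) + k - 1 = a + (k+1) - 1 := by omega
      rw [show a + (k+1) - 1 = (a+1) + k - 1 by omega, ih (a+1) (by omega) (by omega) hk]
      have : a + 1 - 1 = a := by omega
      rw [this]
      exact sC_cvec n j a hj hjn ha (by omega)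

def wordC (n j : ℕ) : List ℕ :=
  ((List.range (n-1)).map (· + 1)) ++ [n] ++ ((List.range (n-j)).map (fun t => n - 1 - t))

lemma wordC_length (n j : ℕ) (hj : 1 ≤ j) (hjn : j ≤ n) : (wordC n j).length = 2*n - j := by
  simp [wordC]; omega

lemma wordC_mem (n j : ℕ) (hn : 1 ≤ n) (hj : 1 ≤ j) : ∀ m ∈ wordC n j, 1 ≤ m ∧ m ≤ n := by
  intro m hm
  simp only [wordC, List.mem_append, List.mem_map, List.mem_range, List.mem_singleton] at hm
  rcases hm with (⟨t, ht, rfl⟩ | rfl) | ⟨t, ht, rfl⟩ <;> omega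

lemma wordC_value (n j : ℕ) (hn : 2 ≤ n) (hj : 1 ≤ j) (hjn : j ≤ n) :
    compC n (wordC n j) (wtC n j) = cvec n j 0 := by
  rw [wordC, compC_append, compC_append]
  have hA : compC n ((List.range (n-j)).map (fun t => n - 1 - t)) (wtC n j) = avec n j (n-1) := by
    rw [wtC_eq_avec n j hj]
    have := phaseA n j hj hjn (n-j) (n-1) (by omega) (by omega)
    rw [show n - 1 - (n - j) = j - 1 by omega] at this
    exact this
  rw [hA]
  have hB : compC n [n] (avec n j (n-1)) = cvec n j (n-1) := by
    rw [compC_cons]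
    show sC n n (compC n [] (avec n j (n-1))) = _
    simp only [compC, List.foldr_nil]
    exact sC_n_avec n j hj hjn (by omega)
  rw [hB]
  have hC := phaseC n j hj hjn (n-1) 1 (by omega) (by omega) (by omega)
  rw [show 1 + (n-1) - 1 = n - 1 by omega] at hC
  have : (List.range (n-1)).map (· + 1) = (List.range (n-1)).map (fun t => t + 1) := rfl
  rw [this, hC]

noncomputable def cost (n : ℕ) (x : ℝ) (i : ℕ) : ℕ :=
  if x < 0 then i else if 0 < x then 2*n - 1 - i else 2*n

noncomputable def Phi (n : ℕ) (v : EuclideanSpace ℝ (Fin n)) : ℕ :=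
  sInf (Set.range fun i : Fin n => cost n (v i) (i : ℕ))

lemma Phi_le (n : ℕ) (v : EuclideanSpace ℝ (Fin n)) (i : Fin n) :
    Phi n v ≤ cost n (v i) (i : ℕ) := Nat.sInf_le ⟨i, rfl⟩

lemma Phi_exists (n : ℕ) (hn : 0 < n) (v : EuclideanSpace ℝ (Fin n)) :
    ∃ i : Fin n, Phi n v = cost n (v i) (i : ℕ) := by
  have h : (Set.range fun i : Fin n => cost n (v i) (i : ℕ)).Nonempty := ⟨_, ⟨⟨0, hn⟩, rfl⟩⟩
  obtain ⟨i, hi⟩ := Nat.sInf_mem h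
  exact ⟨i, hi.symm⟩

lemma cost_step (n i i' : ℕ) (x : ℝ) (h1 : i' ≤ i + 1) (h2 : i ≤ i' + 1) (h3 : i' + 1 ≤ 2*n - 1) :
    cost n x i' ≤ cost n x i + 1 := by
  unfold cost; split_ifs <;> omega

lemma cost_neg (n : ℕ) (hn : 0 < n) (x : ℝ) :
    cost n x (n-1) ≤ cost n (-x) (n-1) + 1 := by
  unfold cost
  split_ifs <;> first | omega | linarith

lemma Phi_step (n m : ℕ) (hn : 2 ≤ n) (hm1 : 1 ≤ m) (hm2 : m ≤ n) (v : EuclideanSpace ℝ (Fin n)) :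
    Phi n v ≤ Phi n (sC n m v) + 1 := by
  obtain ⟨i₀, hi₀⟩ := Phi_exists n (by omega) (sC n m v)
  rw [hi₀]
  rcases eq_or_lt_of_le hm2 with rfl | hmn
  · -- m = n : negation of last coordinate
    rw [sC_apply_n] at *
    by_cases h : (i₀ : ℕ) + 1 = m
    · rw [if_pos h]
      calc Phi m v ≤ cost m (v i₀) (i₀ : ℕ) := Phi_le m v i₀
        _ ≤ cost m (-(v i₀)) (i₀ : ℕ) + 1 := by
            rw [show (i₀ : ℕ) = m - 1 by omega]
            exact cost_neg m (by omega) (v i₀)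
    · rw [if_neg h]
      exact Nat.le_succ_of_le (Phi_le m v i₀)
  · -- m < n : transposition
    rw [sC_apply_lt n m hm1 hmn]
    by_cases h1 : (i₀ : ℕ) + 1 = m
    · rw [if_pos h1]
      calc Phi n v ≤ cost n (v ⟨m, hmn⟩) m := Phi_le n v ⟨m, hmn⟩
        _ ≤ cost n (v ⟨m, hmn⟩) (i₀ : ℕ) + 1 :=
            cost_step n _ m _ (by omega) (by omega) (by omega)
    · rw [if_neg h1]
      by_cases h2 : (i₀ : ℕ) = m
      · rw [if_pos h2]
        calc Phi n v ≤ cost n (v ⟨m-1, by omega⟩) (m-1) := Phi_le n v ⟨m-1, by omega⟩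
          _ ≤ cost n (v ⟨m-1, by omega⟩) (i₀ : ℕ) + 1 :=
              cost_step n _ (m-1) _ (by omega) (by omega) (by omega)
      · rw [if_neg h2]
        exact Nat.le_succ_of_le (Phi_le n v i₀)

lemma Phi_list (n : ℕ) (hn : 2 ≤ n) (l : List ℕ) (hl : ∀ m ∈ l, 1 ≤ m ∧ m ≤ n)
    (v : EuclideanSpace ℝ (Fin n)) :
    Phi n v ≤ Phi n (compC n l v) + l.length := by
  induction l with
  | nil => simp [compC]
  | cons a t ih =>
    have ha := hl a (by simp)
    have ht : ∀ m ∈ t, 1 ≤ m ∧ m ≤ n := fun m hm => hl m (by simp [hm])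
    calc Phi n v ≤ Phi n (compC n t v) + t.length := ih ht
      _ ≤ (Phi n (sC n a (compC n t v)) + 1) + t.length := by
          have := Phi_step n a hn ha.1 ha.2 (compC n t v)
          omega
      _ = Phi n (compC n (a :: t) v) + (a :: t).length := by
          rw [compC_cons]; simp; omega

lemma Phi_wtC (n j : ℕ) (hn : 2 ≤ n) (hj : 1 ≤ j) (hjn : j ≤ n) :
    Phi n (wtC n j) = 2*n - j := by
  apply le_antisymm
  · have h := Phi_le n (wtC n j) ⟨j-1, by omega⟩
    have : wtC n j ⟨j-1, by omega⟩ = 1 := by simp only [wtC, PiLp.toLp_apply]; rw [if_pos]; omega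
    rw [this] at h
    calc Phi n (wtC n j) ≤ cost n 1 (j-1) := h
      _ = 2*n - j := by unfold cost; norm_num; omega
  · obtain ⟨i, hi⟩ := Phi_exists n (by omega) (wtC n j)
    rw [hi]
    have hilt : (i : ℕ) < n := i.isLt
    simp only [wtC, cost, PiLp.toLp_apply]
    split_ifs <;> first | omega | norm_num at *

lemma inner_first (n : ℕ) (hn : 0 < n) (v : EuclideanSpace ℝ (Fin n)) :
    ⟪v, wtC n 1⟫ = v ⟨0, hn⟩ := by
  rw [PiLp.inner_apply]
  rw [Finset.sum_eq_single (⟨0, hn⟩ : Fin n)]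
  · simp [wtC, RCLike.inner_apply]
  · intro b _ hb
    have hb0 : ¬((b : ℕ) < 1) := by
      rcases Nat.lt_or_ge (b : ℕ) 1 with h | h
      · exact absurd (Fin.ext (show (b:ℕ) = 0 by omega)) hb
      · omega
    simp [wtC, hb0, RCLike.inner_apply]
    intro h; exact absurd (by omega) hb0
  · intro h; exact absurd (Finset.mem_univ _) h

lemma lower_bound (n : ℕ) (hn : 2 ≤ n) (j : ℕ) (hj : 1 ≤ j) (hjn : j ≤ n)
    (l : List ℕ) (hl : ∀ m ∈ l, 1 ≤ m ∧ m ≤ n)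
    (hneg : ⟪compC n l (wtC n j), wtC n 1⟫ < 0) : 2*n - j ≤ l.length := by
  rw [inner_first n (by omega)] at hneg
  have h0 : Phi n (compC n l (wtC n j)) = 0 := by
    have h := Phi_le n (compC n l (wtC n j)) ⟨0, by omega⟩
    rw [show cost n (compC n l (wtC n j) ⟨0, by omega⟩) ((⟨0, by omega⟩ : Fin n) : ℕ)
        = 0 from by unfold cost; rw [if_pos hneg]] at h
    omega
  have := Phi_list n hn l hl (wtC n j)
  rw [Phi_wtC n j hn hj hjn, h0] at this
  omega

lemma upper_witness (n : ℕ) (hn : 2 ≤ n) (j : ℕ) (hj : 1 ≤ j) (hjn : j ≤ n) :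
    ⟪compC n (wordC n j) (wtC n j), wtC n 1⟫ < 0 := by
  rw [inner_first n (by omega), wordC_value n j hn hj hjn]
  simp only [cvec, PiLp.toLp_apply]
  norm_num

theorem statement8 (n : ℕ) (hn : 2 ≤ n) :
    (∀ j, 1 ≤ j → j ≤ n →
      IsLeast {k : ℕ | ∃ l : List ℕ, (∀ m ∈ l, 1 ≤ m ∧ m ≤ n) ∧ l.length = k ∧
          ⟪compC n l (wtC n j), wtC n 1⟫ < 0} (2 * n - j)) ∧
    (∀ j, 1 ≤ j → j ≤ n → j ≠ n → ∀ l : List ℕ, (∀ m ∈ l, 1 ≤ m ∧ m ≤ n) →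
        ⟪compC n l (wtC n j), wtC n 1⟫ < 0 → n < l.length) ∧
    ⟪compC n ((List.range n).map (· + 1)) (wtC n n), wtC n 1⟫ < 0 := by
  refine ⟨?_, ?_, ?_⟩
  · intro j hj hjn
    constructor
    · exact ⟨wordC n j, wordC_mem n j (by omega) hj, wordC_length n j hj hjn,
        upper_witness n hn j hj hjn⟩
    · rintro k ⟨l, hl, rfl, hneg⟩
      exact lower_bound n hn j hj hjn l hl hneg
  · intro j hj hjn hjne l hl hneg
    have := lower_bound n hn j hj hjn l hl hneg
    omega
  · have hlist : (List.range n).map (· + 1) = wordC n n := by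
      have h1 : List.range n = List.range (n-1) ++ [n-1] := by
        conv_lhs => rw [show n = (n-1)+1 by omega, List.range_succ]
      rw [h1, List.map_append, wordC]
      simp only [Nat.sub_self, List.range_zero, List.map_nil, List.append_nil,
        List.map_cons]
      rw [show n-1+1 = n by omega]
    rw [hlist]
    exact upper_witness n hn n (by omega) le_rfl
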